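/- For all t > 0, −h''(t)/h(t) + (m−2)·(1 − h'(t)²)/h(t)² − n·h'(t)·f'(t)/(h(t)·f(t)) ≥ 0. (This is the nonnegativity of the Ricci curvature of the Sha–Yang doubly warped metric in the directions of the sphere factor S^{m−1}.) -/

import Mathlib

open Set

/-- Nonnegativity of the Ricci curvature of the Sha–Yang doubly warped metric in the
directions of the sphere factor `S^{m−1}`: for all `t > 0`,
`−h''(t)/h(t) + (m−2)·(1 − h'(t)²)/h(t)² − n·h'(t)·f'(t)/(h(t)·f(t)) ≥ 0`. -/
theorem shaYang_Ric_sphere_nonneg (n m : ℕ) (hn : 2 ≤ n) (hm : 2 ≤ m)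
    (α : ℝ) (hα : α = 2 * ((n : ℝ) - 1) / (m : ℝ))
    (f : ℝ → ℝ) (hf : ContDiff ℝ 3 f)
    (hf0 : f 0 = 1) (hf'0 : deriv f 0 = 0)
    (hfpos : ∀ t ≥ (0 : ℝ), 0 < f t)
    (hode : ∀ t ≥ (0 : ℝ), deriv (deriv f) t = (α / 2) * (f t) ^ (-α - 1))
    (h : ℝ → ℝ) (hh : h = fun t => (2 / α) * deriv f t) :
    ∀ t > (0 : ℝ),
      0 ≤ -(deriv (deriv h) t) / h t
          + ((m : ℝ) - 2) * (1 - (deriv h t) ^ 2) / (h t) ^ 2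
          - (n : ℝ) * (deriv h t * deriv f t) / (h t * f t) := by
  intro t ht
  have hm2 : (2:ℝ) ≤ (m:ℝ) := by exact_mod_cast hm
  have hn2 : (2:ℝ) ≤ (n:ℝ) := by exact_mod_cast hn
  have hmpos : (0:ℝ) < m := by linarith
  have hαpos : 0 < α := by rw [hα]; apply div_pos <;> linarith
  have hα0 : α ≠ 0 := ne_of_gt hαpos
  -- n relation
  have hnrel : α * (m:ℝ) = 2 * ((n:ℝ) - 1) := by
    rw [hα]; field_simp
  -- differentiability
  have hf3 : ContDiff ℝ (2+1) f := by exact_mod_cast hf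
  have hfd : Differentiable ℝ f := (contDiff_succ_iff_deriv.mp hf3).1
  have hf2 : ContDiff ℝ 2 (deriv f) := (contDiff_succ_iff_deriv.mp hf3).2.2
  have hfd2 : Differentiable ℝ (deriv f) := hf2.differentiable (by norm_num)
  -- energy identity
  have energy : ∀ x ≥ (0:ℝ), (deriv f x)^2 + f x ^ (-α) = 1 := by
    intro x hx
    set g : ℝ → ℝ := fun s => (deriv f s)^2 + f s ^ (-α) with hg
    have hgd : ∀ y ∈ Ico (0:ℝ) x, HasDerivWithinAt g 0 (Ici y) y := by
      intro y hy
      have hy0 : (0:ℝ) ≤ y := hy.1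
      have h1 : HasDerivAt (fun s => (deriv f s)^2)
          ((2:ℝ) * deriv f y ^ 1 * deriv (deriv f) y) y :=
        ((hfd2 y).hasDerivAt).pow 2
      have h2 : HasDerivAt (fun s => f s ^ (-α))
          (deriv f y * (-α) * f y ^ (-α - 1)) y :=
        ((hfd y).hasDerivAt).rpow_const (Or.inl (hfpos y hy0).ne')
      have h3 : HasDerivAt g 0 y := by
        have := h1.add h2
        refine this.congr_deriv ?_
        rw [hode y hy0]; ring
      exact h3.hasDerivWithinAt
    have hgc : ContinuousOn g (Icc (0:ℝ) x) := by
      apply ContinuousOn.add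
      · exact (hfd2.continuous.continuousOn).pow 2
      · exact ContinuousOn.rpow_const hfd.continuous.continuousOn
          (fun y hy => Or.inl (hfpos y hy.1).ne')
    have := constant_of_has_deriv_right_zero hgc hgd x (by exact ⟨hx, le_refl x⟩)
    have hg0 : g 0 = 1 := by simp [hg, hf'0, hf0]
    rw [hg0] at this
    exact this
  -- f'' > 0 on [0, ∞)
  have hf''pos : ∀ x ∈ interior (Ici (0:ℝ)), 0 < deriv (deriv f) x := by
    intro x hx
    rw [interior_Ici] at hx
    rw [hode x (le_of_lt hx)]
    have := Real.rpow_pos_of_pos (hfpos x (le_of_lt hx)) (-α - 1)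
    positivity
  -- f' > 0 on (0, ∞)
  have hf'mono : StrictMonoOn (deriv f) (Ici (0:ℝ)) :=
    strictMonoOn_of_deriv_pos (convex_Ici 0) hfd2.continuous.continuousOn hf''pos
  have hD : 0 < deriv f t := by
    have := hf'mono (self_mem_Ici) (mem_Ici.mpr ht.le) ht
    rwa [hf'0] at this
  -- f > 1 on (0, ∞)
  have hfmono : StrictMonoOn f (Ici (0:ℝ)) := by
    apply strictMonoOn_of_deriv_pos (convex_Ici 0) hfd.continuous.continuousOn
    intro x hx
    rw [interior_Ici] at hx
    have := hf'mono self_mem_Ici (mem_Ici.mpr hx.le) hx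
    rwa [hf'0] at this
  have hF : 1 < f t := by
    have := hfmono self_mem_Ici (mem_Ici.mpr ht.le) ht
    rwa [hf0] at this
  have hFpos : 0 < f t := by linarith
  set F := f t with hFdef
  set D := deriv f t with hDdef
  set C := F ^ (-α - 2) with hCdef
  have hCpos : 0 < C := Real.rpow_pos_of_pos hFpos _
  have hC1 : C < 1 := Real.rpow_lt_one_of_one_lt_of_neg hF (by linarith)
  -- relations between powers
  have hBrel : F ^ (-α - 1) = C * F := by
    rw [hCdef, show -α - 1 = (-α - 2) + 1 by ring, Real.rpow_add hFpos, Real.rpow_one]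
  have hArel : F ^ (-α) = C * F ^ (2:ℕ) := by
    rw [hCdef, show -α = (-α - 2) + 2 by ring, Real.rpow_add hFpos,
      show ((2:ℝ)) = ((2:ℕ):ℝ) by norm_num, Real.rpow_natCast]
    norm_num
  -- energy at t
  have hD2 : D ^ 2 = 1 - C * F ^ 2 := by
    have := energy t ht.le
    rw [hArel] at this
    linarith
  have hCF1 : 0 < 1 - C * F ^ 2 := by
    rw [← hD2]; positivity
  -- derivatives of h
  have hderivh : ∀ x, deriv h x = (2 / α) * deriv (deriv f) x := by
    intro x
    rw [hh]
    exact deriv_const_mul_field _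
  have hderivh_eq : ∀ x > (0:ℝ), deriv h x = f x ^ (-α - 1) := by
    intro x hx
    rw [hderivh x, hode x hx.le]
    field_simp
  have hdht : deriv h t = C * F := by rw [hderivh_eq t ht, ← hFdef, hBrel]
  have hddh : deriv (deriv h) t = D * (-α - 1) * C := by
    have heq : deriv h =ᶠ[nhds t] fun s => f s ^ (-α - 1) := by
      filter_upwards [Ioi_mem_nhds ht] with x hx
      exact hderivh_eq x hx
    rw [heq.deriv_eq]
    have : HasDerivAt (fun s => f s ^ (-α - 1)) (D * (-α - 1) * F ^ (-α - 1 - 1)) t :=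
      ((hfd t).hasDerivAt).rpow_const (Or.inl hFpos.ne')
    rw [this.deriv]
    rw [show -α - 1 - 1 = -α - 2 by ring, ← hCdef]
  have hht : h t = 2 / α * D := by rw [hh]
  -- rewrite the goal
  rw [hddh, hdht, hht]
  have hD0 : D ≠ 0 := ne_of_gt hD
  have hF0 : F ≠ 0 := ne_of_gt hFpos
  have key : -(D * (-α - 1) * C) / (2 / α * D)
      + ((m:ℝ) - 2) * (1 - (C * F) ^ 2) / (2 / α * D) ^ 2
      - (n:ℝ) * (C * F * D) / (2 / α * D * F)
      = ((m:ℝ) - 2) * α ^ 2 / 4 * ((1 - C) / (1 - C * F ^ 2)) := by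
    have hn' : (n:ℝ) = α * m / 2 + 1 := by linarith
    have hsq : (2 / α * D) ^ 2 = 4 / α ^ 2 * (1 - C * F ^ 2) := by
      rw [mul_pow, hD2]; ring
    rw [hn', hsq]
    field_simp
    ring
  rw [key]
  have h1 : (0:ℝ) ≤ (m:ℝ) - 2 := by linarith
  have h2 : (0:ℝ) ≤ 1 - C := by linarith
  positivity
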